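/- Let G be a group and H ≤ G. Suppose: (1) the conjugacy class g^G is separable in G; (2) for every finite index normal subgroup K ⊴ G there is a finite index normal subgroup L ≤ K such that the centralizer of the image of g in G/L is contained in the image of C_G(g)·K; and (3) the double coset C_G(g)·H is separable in G. Then the set g^H = {hgh⁻¹ : h ∈ H} is separable in G. -/

import Mathlib

/-- A subset `S` of `G` is separable if it is closed in the profinite topology. -/
def SeparableIn {G : Type*} [Group G] (S : Set G) : Prop :=
  ∀ g ∉ S, ∃ N : Subgroup G, N.Normal ∧ N.FiniteIndex ∧ ∀ s ∈ S, g⁻¹ * s ∉ N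

/-- If the conjugacy class `g^G` is separable, the pair `(G, g)` satisfies the
Centralizer Condition, and the double coset `C_G(g)·H` is separable, then the
`H`-conjugacy class `g^H` is separable in `G`. -/
theorem conjClass_separable_of_CC {G : Type*} [Group G] (H : Subgroup G) (g : G)
    (hclass : SeparableIn {y : G | ∃ x : G, y = x * g * x⁻¹})
    (hCC : ∀ (K : Subgroup G), K.Normal → K.FiniteIndex →
      ∃ (L : Subgroup G) (_ : L.Normal), L.FiniteIndex ∧ L ≤ K ∧
        ∀ x : G, QuotientGroup.mk' L x * QuotientGroup.mk' L g =
            QuotientGroup.mk' L g * QuotientGroup.mk' L x →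
          ∃ c : G, c * g = g * c ∧ ∃ k ∈ K, QuotientGroup.mk' L x = QuotientGroup.mk' L (c * k))
    (hdouble : SeparableIn {y : G | ∃ c : G, c * g = g * c ∧ ∃ h ∈ H, y = c * h}) :
    SeparableIn {y : G | ∃ h ∈ H, y = h * g * h⁻¹} := by
  intro z hz
  by_cases hzg : z ∈ {y : G | ∃ x : G, y = x * g * x⁻¹}
  · obtain ⟨x, rfl⟩ := hzg
    have hxD : x⁻¹ ∉ {y : G | ∃ c : G, c * g = g * c ∧ ∃ h ∈ H, y = c * h} := by
      rintro ⟨c, hc, h, hH, hx⟩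
      apply hz
      refine ⟨h⁻¹, H.inv_mem hH, ?_⟩
      have hx' : x = h⁻¹ * c⁻¹ := by rw [← inv_inv x, hx]; group
      have hcg : c⁻¹ * g * c = g := by
        rw [mul_assoc, ← hc, ← mul_assoc, inv_mul_cancel, one_mul]
      rw [hx']
      calc h⁻¹ * c⁻¹ * g * (h⁻¹ * c⁻¹)⁻¹ = h⁻¹ * (c⁻¹ * g * c) * h⁻¹⁻¹ := by group
        _ = h⁻¹ * g * h⁻¹⁻¹ := by rw [hcg]
    obtain ⟨K, hKn, hKf, hK⟩ := hdouble x⁻¹ hxD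
    obtain ⟨L, hLn, hLf, hLK, hL⟩ := hCC K hKn hKf
    refine ⟨L, hLn, hLf, ?_⟩
    rintro s ⟨h, hH, rfl⟩ hmem
    -- hmem : (x*g*x⁻¹)⁻¹ * (h*g*h⁻¹) ∈ L
    have hq : QuotientGroup.mk' L (h⁻¹ * x) * QuotientGroup.mk' L g =
        QuotientGroup.mk' L g * QuotientGroup.mk' L (h⁻¹ * x) := by
      have hu := hLn.conj_mem _ hmem x⁻¹
      simp only [QuotientGroup.mk'_apply, ← QuotientGroup.mk_mul]
      rw [QuotientGroup.eq]
      convert hu using 1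
      group
    obtain ⟨c, hc, k, hkK, hmkeq⟩ := hL (h⁻¹ * x) hq
    have hl : (c * k)⁻¹ * (h⁻¹ * x) ∈ L := by
      rw [QuotientGroup.mk'_eq_mk'] at hmkeq
      obtain ⟨w, hwL, hw⟩ := hmkeq
      have : w = (h⁻¹ * x)⁻¹ * (c * k) := by rw [← hw]; group
      rw [this] at hwL
      have := L.inv_mem hwL
      convert this using 1
      group
    have hmemK : x⁻¹⁻¹ * (c⁻¹ * h⁻¹) ∈ K := by
      have h1 : k * ((c * k)⁻¹ * (h⁻¹ * x)) ∈ K := K.mul_mem hkK (hLK hl)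
      have h2 := hKn.conj_mem _ h1 (h * c)
      convert h2 using 1
      group
    have hcg : c⁻¹ * g = g * c⁻¹ := by
      rw [inv_mul_eq_iff_eq_mul, ← mul_assoc, hc, mul_assoc, mul_inv_cancel, mul_one]
    exact hK (c⁻¹ * h⁻¹) ⟨c⁻¹, hcg, h⁻¹, H.inv_mem hH, rfl⟩ hmemK
  · obtain ⟨N, hNn, hNf, hN⟩ := hclass z hzg
    exact ⟨N, hNn, hNf, fun s ⟨h, _, hs⟩ => hN s ⟨h, hs⟩⟩
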